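/- Let H be a complex Hilbert space with dim H ≥ 2, let T be a nonzero bounded linear operator on H, and let (Tₙ) be a sequence of nonzero bounded linear operators on H with ‖Tₙ − T‖ → 0. Then ε̂(Tₙ) → ε̂(T); that is, the function ε̂ is continuous at every nonzero operator T. -/

import Mathlib

open scoped ComplexInnerProductSpace

noncomputable section

open RCLike

set_option linter.unusedSectionVars false

variable {H : Type*} [NormedAddCommGroup H] [InnerProductSpace ℂ H] [CompleteSpace H]

/-- `T` is `ε`-approximately orthogonality preserving: orthogonal vectors are mapped to
`ε`-orthogonal vectors. -/
def IsAOP (T : H →L[ℂ] H) (ε : ℝ) : Prop :=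
  ∀ x y : H, ⟪x, y⟫ = 0 → ‖⟪T x, T y⟫‖ ≤ ε * (‖T x‖ * ‖T y‖)

/-- `ε̂(T)`, the smallest `ε ∈ [0,1]` for which `T` is `ε`-AOP. -/
def epsHat (T : H →L[ℂ] H) : ℝ :=
  sInf {ε : ℝ | 0 ≤ ε ∧ ε ≤ 1 ∧ IsAOP T ε}

/-- The minimum modulus `m(T) = inf {‖T x‖ : ‖x‖ = 1}`. -/
def minMod (T : H →L[ℂ] H) : ℝ :=
  sInf {r : ℝ | ∃ x : H, ‖x‖ = 1 ∧ ‖T x‖ = r}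

/-- The set `ℂ𝒱` of scalar multiples of linear isometries of `H`. -/
def scalarIsoms (H : Type*) [NormedAddCommGroup H] [InnerProductSpace ℂ H] :
    Set (H →L[ℂ] H) :=
  {S | ∃ (c : ℂ) (V : H →L[ℂ] H), (∀ x : H, ‖V x‖ = ‖x‖) ∧ S = c • V}

/-- `dist(T, ℂ𝒱)`. -/
def distCV (T : H →L[ℂ] H) : ℝ := Metric.infDist T (scalarIsoms H)

/-- The set `𝒱` of linear isometries of `H`. -/
def isoms (H : Type*) [NormedAddCommGroup H] [InnerProductSpace ℂ H] :
    Set (H →L[ℂ] H) :=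
  {V | ∀ x : H, ‖V x‖ = ‖x‖}

/-- `dist(T, 𝒱)`. -/
def distV (T : H →L[ℂ] H) : ℝ := Metric.infDist T (isoms H)

lemma minMod_bddBelow (T : H →L[ℂ] H) :
    BddBelow {r : ℝ | ∃ x : H, ‖x‖ = 1 ∧ ‖T x‖ = r} :=
  ⟨0, by rintro r ⟨x, -, rfl⟩; exact norm_nonneg _⟩

lemma minMod_set_nonempty [Nontrivial H] (T : H →L[ℂ] H) :
    Set.Nonempty {r : ℝ | ∃ x : H, ‖x‖ = 1 ∧ ‖T x‖ = r} := by
  obtain ⟨x, hx⟩ := exists_norm_eq H (zero_le_one)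
  exact ⟨‖T x‖, x, hx, rfl⟩

lemma minMod_nonneg [Nontrivial H] (T : H →L[ℂ] H) : 0 ≤ minMod T :=
  le_csInf (minMod_set_nonempty T) (by rintro r ⟨x, -, rfl⟩; exact norm_nonneg _)

lemma minMod_le {T : H →L[ℂ] H} {x : H} (hx : ‖x‖ = 1) : minMod T ≤ ‖T x‖ :=
  csInf_le (minMod_bddBelow T) ⟨x, hx, rfl⟩

lemma minMod_le_opNorm [Nontrivial H] (T : H →L[ℂ] H) : minMod T ≤ ‖T‖ := by
  obtain ⟨x, hx⟩ := exists_norm_eq H (zero_le_one : (0:ℝ) ≤ 1)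
  refine (minMod_le hx).trans ?_
  simpa [hx] using T.le_opNorm x

lemma minMod_mul_le (T : H →L[ℂ] H) (z : H) : minMod T * ‖z‖ ≤ ‖T z‖ := by
  rcases eq_or_ne z 0 with rfl | hz
  · simp
  · have hz' : ‖z‖ ≠ 0 := norm_ne_zero_iff.mpr hz
    have hx : ‖(‖z‖⁻¹ : ℝ) • z‖ = 1 := by
      rw [norm_smul, norm_inv, norm_norm, inv_mul_cancel₀ hz']
    have := minMod_le (T := T) hx
    rw [T.map_smul_of_tower, norm_smul, norm_inv, norm_norm] at this
    calc minMod T * ‖z‖ ≤ (‖z‖⁻¹ * ‖T z‖) * ‖z‖ := by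
          exact mul_le_mul_of_nonneg_right this (norm_nonneg _)
      _ = ‖T z‖ := by field_simp

lemma expand_orth {x y : H} (h : ⟪x, y⟫ = 0) (l : ℂ) :
    ‖x + l • y‖ ^ 2 = ‖x‖ ^ 2 + ‖l‖ ^ 2 * ‖y‖ ^ 2 := by
  rw [norm_add_sq (𝕜 := ℂ), inner_smul_right, h, mul_zero, map_zero, norm_smul]
  ring

lemma expand_gen (x y : H) (l : ℂ) :
    ‖x + l • y‖ ^ 2 = ‖x‖ ^ 2 + 2 * re (l * ⟪x, y⟫) + ‖l‖ ^ 2 * ‖y‖ ^ 2 := by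
  rw [norm_add_sq (𝕜 := ℂ), inner_smul_right, norm_smul]
  ring

lemma isAOP_formula [Nontrivial H] (T : H →L[ℂ] H) (hT : T ≠ 0) :
    IsAOP T ((‖T‖ ^ 2 - minMod T ^ 2) / (‖T‖ ^ 2 + minMod T ^ 2)) := by
  intro x y hxy
  have hM : 0 < ‖T‖ := norm_pos_iff.mpr hT
  have hm0 : 0 ≤ minMod T := minMod_nonneg T
  have hmM : minMod T ≤ ‖T‖ := minMod_le_opNorm T
  set M := ‖T‖ with hMdef
  set m := minMod T with hmdef
  have hden : 0 < M ^ 2 + m ^ 2 := by positivity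
  have hnum : 0 ≤ M ^ 2 - m ^ 2 := by nlinarith
  set g := (⟪T x, T y⟫ : ℂ) with hgdef
  rcases eq_or_ne g 0 with hg | hg
  · rw [hg]
    simp only [norm_zero]
    exact mul_nonneg (div_nonneg hnum hden.le) (by positivity)
  · have hu : (0:ℝ) < ‖T x‖ := by
      rcases eq_or_ne (T x) 0 with h | h
      · exact absurd (by simp [hgdef, h]) hg
      · exact norm_pos_iff.mpr h
    have hv : (0:ℝ) < ‖T y‖ := by
      rcases eq_or_ne (T y) 0 with h | h
      · exact absurd (by simp [hgdef, h]) hg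
      · exact norm_pos_iff.mpr h
    set u := ‖T x‖
    set v := ‖T y‖
    set c := ‖g‖ with hcdef
    have hc : 0 < c := norm_pos_iff.mpr hg
    set t := u / v with htdef
    have ht : 0 < t := div_pos hu hv
    have htv : t * v = u := div_mul_cancel₀ _ hv.ne'
    -- the two scalars
    set l1 : ℂ := (t : ℂ) * (-(c : ℂ) / g) with hl1
    set l2 : ℂ := (t : ℂ) * ((c : ℂ) / g) with hl2
    have hnl1 : ‖l1‖ = t := by
      rw [hl1, norm_mul, norm_div, norm_neg, Complex.norm_real, Complex.norm_real,
        Real.norm_eq_abs, Real.norm_eq_abs, abs_of_pos ht, abs_of_pos hc, ← hcdef,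
        div_self hc.ne']
      ring
    have hnl2 : ‖l2‖ = t := by
      rw [hl2, norm_mul, norm_div, Complex.norm_real, Complex.norm_real,
        Real.norm_eq_abs, Real.norm_eq_abs, abs_of_pos ht, abs_of_pos hc, ← hcdef,
        div_self hc.ne']
      ring
    have hl1g : re (l1 * g) = -(t * c) := by
      rw [hl1, mul_assoc, div_mul_cancel₀ _ hg]
      simp [← Complex.ofReal_mul]
    have hl2g : re (l2 * g) = t * c := by
      rw [hl2, mul_assoc, div_mul_cancel₀ _ hg]
      simp [← Complex.ofReal_mul]
    have expT : ∀ l : ℂ, ‖T (x + l • y)‖ ^ 2 = u ^ 2 + 2 * re (l * g) + ‖l‖ ^ 2 * v ^ 2 := by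
      intro l
      rw [map_add, map_smul, expand_gen]
    have low : m ^ 2 * (‖x‖ ^ 2 + t ^ 2 * ‖y‖ ^ 2) ≤ u ^ 2 + t ^ 2 * v ^ 2 - 2 * (t * c) := by
      have h1 := minMod_mul_le T (x + l1 • y)
      have h2 : (m * ‖x + l1 • y‖) ^ 2 ≤ ‖T (x + l1 • y)‖ ^ 2 := by
        apply pow_le_pow_left₀ (by positivity) h1 2
      rw [expT, hl1g] at h2
      rw [mul_pow, expand_orth hxy, hnl1] at h2
      linarith [h2]
    have high : u ^ 2 + t ^ 2 * v ^ 2 + 2 * (t * c) ≤ M ^ 2 * (‖x‖ ^ 2 + t ^ 2 * ‖y‖ ^ 2) := by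
      have h1 := T.le_opNorm (x + l2 • y)
      have h2 : ‖T (x + l2 • y)‖ ^ 2 ≤ (M * ‖x + l2 • y‖) ^ 2 := by
        apply pow_le_pow_left₀ (norm_nonneg _) h1 2
      rw [expT, hl2g] at h2
      rw [mul_pow, expand_orth hxy, hnl2] at h2
      linarith [h2]
    rw [div_mul_eq_mul_div, le_div_iff₀ hden]
    have htv2 : t ^ 2 * v ^ 2 = u ^ 2 := by rw [← htv]; ring
    have e : t * (u * v) = u ^ 2 := by rw [← htv]; ring
    have comb : 2 * t * ((M ^ 2 + m ^ 2) * c) ≤ (M ^ 2 - m ^ 2) * (2 * u ^ 2) := by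
      nlinarith [mul_le_mul_of_nonneg_left low (sq_nonneg M),
        mul_le_mul_of_nonneg_left high (sq_nonneg m), htv2]
    refine le_of_mul_le_mul_left ?_ (show (0:ℝ) < 2 * t by positivity)
    calc (2*t) * (c * (M^2+m^2)) = 2*t*((M^2+m^2)*c) := by ring
      _ ≤ (M^2-m^2)*(2*u^2) := comb
      _ = (2*t) * ((M^2-m^2)*(u*v)) := by rw [← e]; ring

lemma expand_two (a b : H) (mu nu : ℂ) :
    ‖mu • a + nu • b‖ ^ 2 = ‖mu‖ ^ 2 * ‖a‖ ^ 2
      + 2 * re ((starRingEnd ℂ) mu * nu * ⟪a, b⟫) + ‖nu‖ ^ 2 * ‖b‖ ^ 2 := by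
  rw [norm_add_sq (𝕜 := ℂ), inner_smul_left, inner_smul_right, norm_smul, norm_smul, ← mul_assoc]
  ring

lemma star_ineq {T : H →L[ℂ] H} {ε : ℝ} (hε : 0 ≤ ε) (hT : IsAOP T ε) {u v : H}
    (huv : ⟪u, v⟫ = 0) (hnorm : ‖u‖ = ‖v‖) :
    ‖T u‖ ^ 2 - ‖T v‖ ^ 2 ≤ ε * (‖T u‖ ^ 2 + ‖T v‖ ^ 2) := by
  have hvu : ⟪v, u⟫ = 0 := by rwa [inner_eq_zero_symm] at huv
  have horth : ⟪u + v, u - v⟫ = 0 := by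
    rw [inner_sub_right, inner_add_left, inner_add_left, huv, hvu,
      inner_self_eq_norm_sq_to_K, inner_self_eq_norm_sq_to_K, hnorm]
    ring
  have h := hT _ _ horth
  rw [map_add, map_sub] at h
  have hre : re ⟪T u + T v, T u - T v⟫ = ‖T u‖ ^ 2 - ‖T v‖ ^ 2 := by
    rw [inner_sub_right, inner_add_left, inner_add_left, map_sub, map_add, map_add,
      inner_self_eq_norm_sq, inner_self_eq_norm_sq, inner_re_symm (T v) (T u)]
    ring
  have h1 : ‖T u‖ ^ 2 - ‖T v‖ ^ 2 ≤ ‖(⟪T u + T v, T u - T v⟫ : ℂ)‖ := by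
    rw [← hre]
    exact (le_abs_self _).trans (abs_re_le_norm _)
  have h2 : ε * (‖T u + T v‖ * ‖T u - T v‖) ≤ ε * ((‖T u + T v‖ ^ 2 + ‖T u - T v‖ ^ 2) / 2) := by
    apply mul_le_mul_of_nonneg_left _ hε
    nlinarith [sq_nonneg (‖T u + T v‖ - ‖T u - T v‖)]
  have hpar := parallelogram_law_with_norm ℂ (T u) (T v)
  have := h1.trans (h.trans h2)
  nlinarith [this, hpar]

lemma key_pointwise {T : H →L[ℂ] H} {ε : ℝ} (hε : 0 ≤ ε) (hT : IsAOP T ε) {x y : H}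
    (hx : ‖x‖ = 1) (hy : ‖y‖ = 1) :
    (1 - ε) * ‖T x‖ ^ 2 ≤ (1 + ε) * ‖T y‖ ^ 2 := by
  rcases le_or_gt 1 ε with h1 | h1
  · nlinarith [sq_nonneg ‖T x‖, sq_nonneg ‖T y‖]
  set α : ℂ := ⟪x, y⟫ with hα
  rcases eq_or_ne (y - α • x) 0 with hz | hz
  · have hyx : y = α • x := by rwa [sub_eq_zero] at hz
    have hTy : ‖T y‖ = ‖α‖ * ‖T x‖ := by rw [hyx, map_smul, norm_smul]
    have habs : ‖α‖ = 1 := by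
      have : ‖y‖ = ‖α‖ * ‖x‖ := by rw [hyx, norm_smul]
      rw [hx, hy, mul_one] at this
      exact this.symm
    rw [hTy, habs, one_mul]
    nlinarith [sq_nonneg ‖T x‖]
  · set z := y - α • x with hzdef
    have hxz : ⟪x, z⟫ = 0 := by
      rw [hzdef, inner_sub_right, inner_smul_right, inner_self_eq_norm_sq_to_K, hx]
      simp [hα]
    set β : ℝ := ‖z‖ with hβdef
    have hβ : 0 < β := norm_pos_iff.mpr hz
    set w : H := ((β : ℂ))⁻¹ • z with hwdef
    have hβc : ((β : ℂ)) ≠ 0 := by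
      simp only [ne_eq, Complex.ofReal_eq_zero]
      exact hβ.ne'
    have hw : ‖w‖ = 1 := by
      rw [hwdef, norm_smul, norm_inv, Complex.norm_real, Real.norm_eq_abs, abs_of_pos hβ,
        ← hβdef, inv_mul_cancel₀ hβ.ne']
    have hxw : ⟪x, w⟫ = 0 := by rw [hwdef, inner_smul_right, hxz, mul_zero]
    have hy2 : y = α • x + (β : ℂ) • w := by
      rw [hwdef, smul_inv_smul₀ hβc, hzdef]
      abel
    have hβnorm : ‖((β:ℂ))‖ = β := by
      rw [Complex.norm_real, Real.norm_eq_abs, abs_of_pos hβ]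
    have hax_w : ⟪α • x, w⟫ = 0 := by rw [inner_smul_left, hxw, mul_zero]
    have hab : ‖α‖ ^ 2 + β ^ 2 = 1 := by
      have hE := expand_orth hax_w ((β : ℂ))
      rw [← hy2, hy, norm_smul, hx, hβnorm, hw] at hE
      calc ‖α‖ ^ 2 + β ^ 2 = (‖α‖ * 1) ^ 2 + β ^ 2 * 1 ^ 2 := by ring
        _ = 1 ^ 2 := hE.symm
        _ = 1 := one_pow 2
    have hwx : ⟪w, x⟫ = 0 := by rwa [inner_eq_zero_symm] at hxw
    set y' : H := (-(β:ℂ)) • x + (starRingEnd ℂ α) • w with hy'def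
    have hyy' : ⟪y, y'⟫ = 0 := by
      rw [hy2, hy'def]
      simp only [inner_add_left, inner_add_right, inner_smul_left, inner_smul_right, hxw, hwx,
        inner_self_eq_norm_sq_to_K, hx, hw, Complex.conj_ofReal, map_neg]
      push_cast
      ring
    have hy'norm : ‖y'‖ = 1 := by
      have hE := expand_orth (x := (-(β:ℂ)) • x) (y := w)
        (by rw [inner_smul_left, hxw, mul_zero]) (starRingEnd ℂ α)
      rw [← hy'def, norm_smul, hx, hw, norm_neg, hβnorm, RCLike.norm_conj] at hE
      have h2 : ‖y'‖ ^ 2 = 1 := by rw [hE]; nlinarith [hab]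
      calc ‖y'‖ = Real.sqrt (‖y'‖ ^ 2) := (Real.sqrt_sq (norm_nonneg _)).symm
        _ = 1 := by rw [h2, Real.sqrt_one]
    have hTy2 : ‖T y‖ ^ 2 = ‖α‖ ^ 2 * ‖T x‖ ^ 2
        + 2 * re ((starRingEnd ℂ) α * (β:ℂ) * ⟪T x, T w⟫) + β ^ 2 * ‖T w‖ ^ 2 := by
      rw [hy2, map_add, map_smul, map_smul, expand_two, hβnorm]
    have e2 : (starRingEnd ℂ) (-(β:ℂ)) * (starRingEnd ℂ α) * ⟪T x, T w⟫
        = -((starRingEnd ℂ) α * (β:ℂ) * ⟪T x, T w⟫) := by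
      rw [map_neg, Complex.conj_ofReal]; ring
    have hTy'2 : ‖T y'‖ ^ 2 = β ^ 2 * ‖T x‖ ^ 2
        - 2 * re ((starRingEnd ℂ) α * (β:ℂ) * ⟪T x, T w⟫) + ‖α‖ ^ 2 * ‖T w‖ ^ 2 := by
      rw [hy'def, map_add, map_smul, map_smul, expand_two, e2, map_neg, norm_neg, hβnorm,
        RCLike.norm_conj]
      ring
    have trace : ‖T y‖ ^ 2 + ‖T y'‖ ^ 2 = ‖T x‖ ^ 2 + ‖T w‖ ^ 2 := by
      rw [hTy2, hTy'2]
      linear_combination (‖T x‖ ^ 2 + ‖T w‖ ^ 2) * hab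
    have s1 := star_ineq hε hT hxw (by rw [hx, hw])
    have s2 := star_ineq hε hT (by rwa [inner_eq_zero_symm] at hyy') (by rw [hy'norm, hy])
    have p1 : 2 * ‖T x‖ ^ 2 ≤ (1 + ε) * (‖T x‖ ^ 2 + ‖T w‖ ^ 2) := by linarith [s1]
    have trace' : ε * (‖T y'‖ ^ 2 + ‖T y‖ ^ 2) = ε * (‖T x‖ ^ 2 + ‖T w‖ ^ 2) := by
      rw [← trace]; ring
    have p2 : (1 - ε) * (‖T x‖ ^ 2 + ‖T w‖ ^ 2) ≤ 2 * ‖T y‖ ^ 2 := by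
      linarith [s2, trace, trace']
    have q1 := mul_le_mul_of_nonneg_left p1 (by linarith : (0:ℝ) ≤ 1 - ε)
    have q2 := mul_le_mul_of_nonneg_left p2 (by linarith : (0:ℝ) ≤ 1 + ε)
    have mid : (1 - ε) * ((1 + ε) * (‖T x‖ ^ 2 + ‖T w‖ ^ 2))
        = (1 + ε) * ((1 - ε) * (‖T x‖ ^ 2 + ‖T w‖ ^ 2)) := by ring
    linarith [q1, q2, mid]

lemma formula_le [Nontrivial H] {T : H →L[ℂ] H} (hT : T ≠ 0) {ε : ℝ} (hε0 : 0 ≤ ε)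
    (hA : IsAOP T ε) :
    (‖T‖ ^ 2 - minMod T ^ 2) / (‖T‖ ^ 2 + minMod T ^ 2) ≤ ε := by
  have hM : 0 < ‖T‖ := norm_pos_iff.mpr hT
  have hm0 : 0 ≤ minMod T := minMod_nonneg T
  have hden : 0 < ‖T‖ ^ 2 + minMod T ^ 2 := by positivity
  rw [div_le_iff₀ hden]
  suffices h : (1 - ε) * ‖T‖ ^ 2 ≤ (1 + ε) * minMod T ^ 2 by nlinarith [h]
  rcases le_or_gt 1 ε with h1 | h1
  · nlinarith [sq_nonneg ‖T‖, sq_nonneg (minMod T)]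
  · have step1 : ∀ y : H, ‖y‖ = 1 → (1 - ε) * ‖T‖ ^ 2 ≤ (1 + ε) * ‖T y‖ ^ 2 := by
      intro y hy
      have hqnn : (0:ℝ) ≤ (1 + ε) / (1 - ε) := div_nonneg (by linarith) (by linarith)
      have hbound : ‖T‖ ≤ Real.sqrt ((1 + ε) / (1 - ε)) * ‖T y‖ := by
        apply T.opNorm_le_bound (by positivity)
        intro z
        rcases eq_or_ne z 0 with rfl | hz
        · simp
        · have hn : 0 < ‖z‖ := norm_pos_iff.mpr hz
          have hzx : ‖(‖z‖⁻¹ : ℝ) • z‖ = 1 := by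
            rw [norm_smul, norm_inv, norm_norm, inv_mul_cancel₀ hn.ne']
          have key := key_pointwise hε0 hA hzx hy
          rw [T.map_smul_of_tower, norm_smul, norm_inv, norm_norm] at key
          have e3 : (‖z‖⁻¹ * ‖T z‖) ^ 2 * ‖z‖ ^ 2 = ‖T z‖ ^ 2 := by
            field_simp
          have hsq : ‖T z‖ ^ 2 ≤ (Real.sqrt ((1 + ε) / (1 - ε)) * ‖T y‖ * ‖z‖) ^ 2 := by
            rw [mul_pow, mul_pow, Real.sq_sqrt hqnn, div_mul_eq_mul_div, div_mul_eq_mul_div,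
              le_div_iff₀ (by linarith : (0:ℝ) < 1 - ε)]
            have := mul_le_mul_of_nonneg_right key (sq_nonneg ‖z‖)
            nlinarith [this, e3]
          calc ‖T z‖ = Real.sqrt (‖T z‖ ^ 2) := (Real.sqrt_sq (norm_nonneg _)).symm
            _ ≤ Real.sqrt ((Real.sqrt ((1 + ε) / (1 - ε)) * ‖T y‖ * ‖z‖) ^ 2) :=
                Real.sqrt_le_sqrt hsq
            _ = Real.sqrt ((1 + ε) / (1 - ε)) * ‖T y‖ * ‖z‖ := Real.sqrt_sq (by positivity)
      have hb2 : ‖T‖ ^ 2 ≤ (Real.sqrt ((1 + ε) / (1 - ε)) * ‖T y‖) ^ 2 :=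
        pow_le_pow_left₀ (norm_nonneg _) hbound 2
      rw [mul_pow, Real.sq_sqrt hqnn, div_mul_eq_mul_div,
        le_div_iff₀ (by linarith : (0:ℝ) < 1 - ε)] at hb2
      linarith
    have hq2 : (0:ℝ) ≤ (1 - ε) / (1 + ε) := div_nonneg (by linarith) (by linarith)
    have step2 : Real.sqrt ((1 - ε) / (1 + ε)) * ‖T‖ ≤ minMod T := by
      apply le_csInf (minMod_set_nonempty T)
      rintro r ⟨y, hy, rfl⟩
      have h2 : (Real.sqrt ((1 - ε) / (1 + ε)) * ‖T‖) ^ 2 ≤ ‖T y‖ ^ 2 := by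
        rw [mul_pow, Real.sq_sqrt hq2, div_mul_eq_mul_div,
          div_le_iff₀ (by linarith : (0:ℝ) < 1 + ε)]
        nlinarith [step1 y hy]
      calc Real.sqrt ((1 - ε) / (1 + ε)) * ‖T‖ =
          Real.sqrt ((Real.sqrt ((1 - ε) / (1 + ε)) * ‖T‖) ^ 2) :=
            (Real.sqrt_sq (by positivity)).symm
        _ ≤ Real.sqrt (‖T y‖ ^ 2) := Real.sqrt_le_sqrt h2
        _ = ‖T y‖ := Real.sqrt_sq (norm_nonneg _)
    have h3 : (Real.sqrt ((1 - ε) / (1 + ε)) * ‖T‖) ^ 2 ≤ minMod T ^ 2 :=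
      pow_le_pow_left₀ (by positivity) step2 2
    rw [mul_pow, Real.sq_sqrt hq2, div_mul_eq_mul_div,
      div_le_iff₀ (by linarith : (0:ℝ) < 1 + ε)] at h3
    nlinarith [h3]

lemma isAOP_one (T : H →L[ℂ] H) : IsAOP T 1 := fun x y _ => by
  rw [one_mul]
  exact norm_inner_le_norm _ _

lemma epsHat_eq [Nontrivial H] (T : H →L[ℂ] H) (hT : T ≠ 0) :
    epsHat T = (‖T‖ ^ 2 - minMod T ^ 2) / (‖T‖ ^ 2 + minMod T ^ 2) := by
  have hM : 0 < ‖T‖ := norm_pos_iff.mpr hT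
  have hm0 : 0 ≤ minMod T := minMod_nonneg T
  have hmM : minMod T ≤ ‖T‖ := minMod_le_opNorm T
  have hden : 0 < ‖T‖ ^ 2 + minMod T ^ 2 := by positivity
  have hf0 : 0 ≤ (‖T‖ ^ 2 - minMod T ^ 2) / (‖T‖ ^ 2 + minMod T ^ 2) :=
    div_nonneg (by nlinarith) hden.le
  have hf1 : (‖T‖ ^ 2 - minMod T ^ 2) / (‖T‖ ^ 2 + minMod T ^ 2) ≤ 1 := by
    rw [div_le_one hden]
    nlinarith [sq_nonneg (minMod T)]
  apply le_antisymm
  · exact csInf_le ⟨0, fun r hr => hr.1⟩ ⟨hf0, hf1, isAOP_formula T hT⟩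
  · refine le_csInf ⟨1, ?_⟩ ?_
    · exact ⟨zero_le_one, le_refl 1, isAOP_one T⟩
    · rintro ε ⟨hε0, _, hA⟩
      exact formula_le hT hε0 hA

lemma minMod_lip [Nontrivial H] (S T : H →L[ℂ] H) : minMod S ≤ minMod T + ‖S - T‖ := by
  have h : ∀ r ∈ {r : ℝ | ∃ x : H, ‖x‖ = 1 ∧ ‖T x‖ = r}, minMod S - ‖S - T‖ ≤ r := by
    rintro r ⟨x, hx, rfl⟩
    have h1 : minMod S ≤ ‖S x‖ := minMod_le hx
    have h2 : ‖S x‖ ≤ ‖T x‖ + ‖S - T‖ := by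
      calc ‖S x‖ = ‖T x + (S - T) x‖ := by
            simp [ContinuousLinearMap.sub_apply]
        _ ≤ ‖T x‖ + ‖(S - T) x‖ := norm_add_le _ _
        _ ≤ ‖T x‖ + ‖S - T‖ * ‖x‖ := by linarith [(S - T).le_opNorm x]
        _ = ‖T x‖ + ‖S - T‖ := by rw [hx, mul_one]
    linarith
  have h2 : minMod S - ‖S - T‖ ≤ minMod T := le_csInf (minMod_set_nonempty T) h
  linarith

/-- `ε̂` is continuous at every nonzero operator. -/
theorem epsHat_continuous (hdim : 2 ≤ Module.rank ℂ H) (T : H →L[ℂ] H) (hT : T ≠ 0)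
    (Tn : ℕ → H →L[ℂ] H) (hTn : ∀ n, Tn n ≠ 0)
    (hconv : Filter.Tendsto (fun n => ‖Tn n - T‖) Filter.atTop (nhds 0)) :
    Filter.Tendsto (fun n => epsHat (Tn n)) Filter.atTop (nhds (epsHat T)) := by
  have hnt : Nontrivial H := by
    have h0 : 0 < Module.rank ℂ H := lt_of_lt_of_le (by norm_num) hdim
    exact rank_pos_iff_nontrivial.mp h0
  have hconvT : Filter.Tendsto Tn Filter.atTop (nhds T) :=
    tendsto_iff_norm_sub_tendsto_zero.mpr hconv
  have hq : Filter.Tendsto (fun n => ‖Tn n‖) Filter.atTop (nhds ‖T‖) :=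
    (continuous_norm.tendsto T).comp hconvT
  have hp : Filter.Tendsto (fun n => minMod (Tn n)) Filter.atTop (nhds (minMod T)) := by
    rw [← tendsto_sub_nhds_zero_iff]
    apply squeeze_zero_norm (a := fun n => ‖Tn n - T‖) _ hconv
    intro n
    have l1 := minMod_lip (Tn n) T
    have l2 := minMod_lip T (Tn n)
    have hrev : ‖T - Tn n‖ = ‖Tn n - T‖ := norm_sub_rev _ _
    rw [Real.norm_eq_abs, abs_le]
    constructor
    · linarith
    · linarith
  have hMpos : 0 < ‖T‖ := norm_pos_iff.mpr hT
  have hden : (‖T‖ ^ 2 + minMod T ^ 2) ≠ 0 := by positivity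
  have main : Filter.Tendsto
      (fun n => (‖Tn n‖ ^ 2 - minMod (Tn n) ^ 2) / (‖Tn n‖ ^ 2 + minMod (Tn n) ^ 2))
      Filter.atTop
      (nhds ((‖T‖ ^ 2 - minMod T ^ 2) / (‖T‖ ^ 2 + minMod T ^ 2))) :=
    Filter.Tendsto.div ((hq.pow 2).sub (hp.pow 2)) ((hq.pow 2).add (hp.pow 2)) hden
  rw [epsHat_eq T hT]
  exact Filter.Tendsto.congr (fun n => (epsHat_eq (Tn n) (hTn n)).symm) main
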